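/- arXiv:2510.06120 — 3 statements merged into one kernel-verified Lean document; each statement's English description precedes it below -/
import Mathlib

section
/- Let a ∈ ℝ with |a| < 1, let δ ∈ (0, min((1-a)/3, 1/2)), and let C > 0. Suppose b : [0, ∞) → ℝ is continuous with |b(t)| ≤ C(1 + t^{3/4}) for all t ≥ 0. Define p(t) := exp(-a·t - b(t)), w(t) := exp(-(a+1)·t - b(t)), and ϖ(t) := ∫₀ᵗ 1/p(s) ds. Then ∫₀^∞ ϖ(t)² · w(t) dt < ∞ and ∫₀^∞ w(t) dt < ∞. -/
open Set MeasureTheory Real Filter Asymptotics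

/-- Deterministic limit-circle estimate for `|a| < 1`: both `ϖ²·w` and `w` are
integrable on `(0,∞)`, where `p(t) = exp(-at - b(t))`, `w(t) = exp(-(a+1)t - b(t))`,
`ϖ(t) = ∫₀ᵗ 1/p`, and `|b(t)| ≤ C(1+t^{3/4})`. -/
theorem stmt2 (a δ C : ℝ) (ha : |a| < 1)
    (hδ : δ ∈ Set.Ioo (0 : ℝ) (min ((1 - a) / 3) (1 / 2))) (hC : 0 < C)
    (b : ℝ → ℝ) (hb : Continuous b)
    (hbound : ∀ t : ℝ, 0 ≤ t → |b t| ≤ C * (1 + t ^ ((3 : ℝ) / 4)))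
    (p w ϖ : ℝ → ℝ)
    (hp : ∀ t, p t = Real.exp (-(a * t) - b t))
    (hw : ∀ t, w t = Real.exp (-((a + 1) * t) - b t))
    (hϖ : ∀ t, ϖ t = ∫ s in (0 : ℝ)..t, 1 / p s) :
    MeasureTheory.IntegrableOn (fun t => (ϖ t) ^ 2 * w t) (Set.Ioi 0)
        MeasureTheory.volume ∧
      MeasureTheory.IntegrableOn w (Set.Ioi 0) MeasureTheory.volume := by
  have hε0 : (0:ℝ) < 1 - |a| := by linarith
  set ε := 1 - |a| with hεdef
  have ha1 : 0 < a + 1 := by rcases abs_lt.mp ha with ⟨h1, h2⟩; linarith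
  have hεa : ε ≤ a + 1 := by
    have := abs_nonneg a
    have := neg_abs_le a
    rw [hεdef]; linarith
  -- continuity facts
  have hq : ∀ s, 1 / p s = Real.exp (a * s + b s) := by
    intro s; rw [hp, one_div, ← Real.exp_neg]; ring_nf
  have hqc : Continuous fun s => 1 / p s := by
    simp only [hq]; exact (Continuous.add (continuous_const.mul continuous_id) hb).rexp
  have hϖc : Continuous ϖ := by
    have : ϖ = fun t => ∫ s in (0:ℝ)..t, 1 / p s := funext hϖ
    rw [this]
    exact intervalIntegral.continuous_primitive (fun x y => hqc.intervalIntegrable x y) 0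
  have hwc : Continuous w := by
    have : w = fun t => Real.exp (-((a + 1) * t) - b t) := funext hw
    rw [this]
    exact ((continuous_const.mul continuous_id).neg.sub hb).rexp
  -- threshold
  set K := 24 * C / ε with hKdef
  have hK0 : 0 < K := by positivity
  set T := max 1 (K ^ 4) with hTdef
  have hmain : ∀ t : ℝ, T ≤ t →
      6 * C * t ^ ((3:ℝ)/4) ≤ ε / 4 * t ∧ (1:ℝ) ≤ t ^ ((3:ℝ)/4) ∧ (1:ℝ) ≤ t := by
    intro t ht
    have h1t : (1:ℝ) ≤ t := le_trans (le_max_left _ _) ht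
    have h0t : (0:ℝ) ≤ t := by linarith
    have h34 : (1:ℝ) ≤ t ^ ((3:ℝ)/4) := by
      calc (1:ℝ) = 1 ^ ((3:ℝ)/4) := (Real.one_rpow _).symm
        _ ≤ t ^ ((3:ℝ)/4) := Real.rpow_le_rpow zero_le_one h1t (by norm_num)
    refine ⟨?_, h34, h1t⟩
    have hK4 : K ^ 4 ≤ t := le_trans (le_max_right _ _) ht
    have hK14 : K ≤ t ^ ((1:ℝ)/4) := by
      calc K = (K ^ (4:ℕ)) ^ ((1:ℝ)/4) := by
              rw [← Real.rpow_natCast K 4, ← Real.rpow_mul hK0.le]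
              norm_num
        _ ≤ t ^ ((1:ℝ)/4) := Real.rpow_le_rpow (by positivity) hK4 (by norm_num)
    have hsplit : t ^ ((3:ℝ)/4) * t ^ ((1:ℝ)/4) = t := by
      rw [← Real.rpow_add' h0t (by norm_num)]; norm_num
    have h34pos : (0:ℝ) < t ^ ((3:ℝ)/4) := by positivity
    have hKt : t ^ ((3:ℝ)/4) * K ≤ t := by
      calc t ^ ((3:ℝ)/4) * K ≤ t ^ ((3:ℝ)/4) * t ^ ((1:ℝ)/4) :=
            mul_le_mul_of_nonneg_left hK14 h34pos.le
        _ = t := hsplit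
    have hKC : 6 * C = ε / 4 * K := by rw [hKdef]; field_simp; ring
    calc 6 * C * t ^ ((3:ℝ)/4) = ε / 4 * (t ^ ((3:ℝ)/4) * K) := by rw [hKC]; ring
      _ ≤ ε / 4 * t := mul_le_mul_of_nonneg_left hKt (by positivity)
  -- pointwise bounds for large t
  have hwbound : ∀ t : ℝ, T ≤ t → w t ≤ Real.exp (-(ε/2) * t) := by
    intro t ht
    obtain ⟨hct, h34, h1t⟩ := hmain t ht
    have h0t : (0:ℝ) ≤ t := by linarith
    have hb1 : -(b t) ≤ 2 * C * t ^ ((3:ℝ)/4) := by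
      have h1 := hbound t h0t
      have h2 := neg_abs_le (b t)
      nlinarith
    rw [hw]
    apply Real.exp_le_exp.mpr
    nlinarith [mul_le_mul_of_nonneg_right hεa h0t, hC.le, h34]
  have hfbound : ∀ t : ℝ, T ≤ t →
      (ϖ t) ^ 2 * w t ≤ t ^ 2 * Real.exp (-(3*ε/4) * t) := by
    intro t ht
    obtain ⟨hct, h34, h1t⟩ := hmain t ht
    have h0t : (0:ℝ) ≤ t := by linarith
    set E := Real.exp (max a 0 * t + 2 * C * t ^ ((3:ℝ)/4)) with hEdef
    have hint : ∀ s ∈ Icc (0:ℝ) t, 1 / p s ≤ E := by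
      intro s hs
      rw [hq, hEdef]
      apply Real.exp_le_exp.mpr
      have hs34 : s ^ ((3:ℝ)/4) ≤ t ^ ((3:ℝ)/4) :=
        Real.rpow_le_rpow hs.1 hs.2 (by norm_num)
      have hbs : b s ≤ 2 * C * t ^ ((3:ℝ)/4) := by
        have h1 := hbound s hs.1
        have h2 := le_abs_self (b s)
        nlinarith
      have has : a * s ≤ max a 0 * t := by
        calc a * s ≤ max a 0 * s := mul_le_mul_of_nonneg_right (le_max_left a 0) hs.1
          _ ≤ max a 0 * t := mul_le_mul_of_nonneg_left hs.2 (le_max_right a 0)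
      linarith
    have hϖ0 : 0 ≤ ϖ t := by
      rw [hϖ]
      apply intervalIntegral.integral_nonneg h0t
      intro u _
      rw [hq]; positivity
    have hϖle : ϖ t ≤ t * E := by
      rw [hϖ]
      calc (∫ s in (0:ℝ)..t, 1 / p s) ≤ ∫ _ in (0:ℝ)..t, E :=
            intervalIntegral.integral_mono_on h0t (hqc.intervalIntegrable 0 t)
              (intervalIntegrable_const) hint
        _ = t * E := by simp
    have hwle : w t ≤ Real.exp (-((a+1) * t) + 2 * C * t ^ ((3:ℝ)/4)) := by
      rw [hw]
      apply Real.exp_le_exp.mpr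
      have h1 := hbound t h0t
      have h2 := neg_abs_le (b t)
      nlinarith
    have hw0 : 0 < w t := by rw [hw]; exact Real.exp_pos _
    have hE0 : 0 < E := Real.exp_pos _
    calc (ϖ t) ^ 2 * w t ≤ (t * E) ^ 2 * Real.exp (-((a+1) * t) + 2 * C * t ^ ((3:ℝ)/4)) := by
          apply mul_le_mul (by nlinarith) hwle hw0.le (by positivity)
      _ = t ^ 2 * Real.exp ((2 * max a 0 - (a+1)) * t + 6 * C * t ^ ((3:ℝ)/4)) := by
          rw [hEdef, mul_pow, ← Real.exp_nat_mul, mul_assoc, ← Real.exp_add]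
          congr 1
          push_cast
          ring
      _ ≤ t ^ 2 * Real.exp (-(3*ε/4) * t) := by
          apply mul_le_mul_of_nonneg_left _ (by positivity)
          apply Real.exp_le_exp.mpr
          have h2max : 2 * max a 0 = a + |a| := by
            rcases abs_cases a with ⟨h1, h2⟩ | ⟨h1, h2⟩
            · rw [max_eq_left h2, h1]; ring
            · rw [max_eq_right h2.le, h1]; ring
          have : (2 * max a 0 - (a+1)) * t = -ε * t := by rw [h2max, hεdef]; ring
          rw [this]; linarith
  -- eventual square bound
  have htt : Tendsto (fun t : ℝ => ε / 4 * t) atTop atTop :=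
    Tendsto.const_mul_atTop (by positivity) tendsto_id
  have h2ev : ∀ᶠ x : ℝ in atTop, x ^ 2 * Real.exp (-x) ≤ 1 :=
    (tendsto_pow_mul_exp_neg_atTop_nhds_zero 2).eventually (eventually_le_nhds one_pos)
  have hsq : ∀ᶠ t : ℝ in atTop, t ^ 2 ≤ (4/ε) ^ 2 * Real.exp (ε / 4 * t) := by
    filter_upwards [htt.eventually h2ev] with t h
    set x := ε / 4 * t with hx
    have hex : 0 < Real.exp x := Real.exp_pos _
    have hx2 : x ^ 2 ≤ Real.exp x := by
      have h1 : Real.exp (-x) * Real.exp x = 1 := by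
        rw [← Real.exp_add]; simp
      nlinarith
    have ht2 : t ^ 2 = (4/ε) ^ 2 * x ^ 2 := by
      rw [hx]; field_simp
    rw [ht2]
    nlinarith
  -- the big-O statements
  have hOf : (fun t => (ϖ t) ^ 2 * w t) =O[atTop] fun t => Real.exp (-(ε/2) * t) := by
    apply IsBigO.of_bound ((4/ε) ^ 2)
    filter_upwards [eventually_ge_atTop T, hsq] with t ht hsqt
    have hw0 : 0 < w t := by rw [hw]; exact Real.exp_pos _
    have hϖ2 : 0 ≤ (ϖ t) ^ 2 * w t := by positivity
    rw [Real.norm_eq_abs, Real.norm_eq_abs, abs_of_nonneg hϖ2,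
      abs_of_pos (Real.exp_pos _)]
    calc (ϖ t) ^ 2 * w t ≤ t ^ 2 * Real.exp (-(3*ε/4) * t) := hfbound t ht
      _ ≤ ((4/ε) ^ 2 * Real.exp (ε / 4 * t)) * Real.exp (-(3*ε/4) * t) :=
          mul_le_mul_of_nonneg_right hsqt (Real.exp_pos _).le
      _ = (4/ε) ^ 2 * Real.exp (-(ε/2) * t) := by
          rw [mul_assoc, ← Real.exp_add]; ring_nf
  have hOw : w =O[atTop] fun t => Real.exp (-(ε/2) * t) := by
    apply IsBigO.of_bound 1
    filter_upwards [eventually_ge_atTop T] with t ht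
    have hw0 : 0 < w t := by rw [hw]; exact Real.exp_pos _
    rw [Real.norm_eq_abs, Real.norm_eq_abs, abs_of_pos hw0, abs_of_pos (Real.exp_pos _),
      one_mul]
    exact hwbound t ht
  constructor
  · exact integrable_of_isBigO_exp_neg (by positivity : (0:ℝ) < ε/2)
      ((hϖc.pow 2).mul hwc).continuousOn hOf
  · exact integrable_of_isBigO_exp_neg (by positivity : (0:ℝ) < ε/2)
      hwc.continuousOn hOw
end

section
/- Let a > 1, let δ ∈ (0, min((a-1)/3, 1/2)), and let C > 0. Suppose b : [0, ∞) → ℝ is continuous with |b(t)| ≤ C(1 + t^{3/4}) for all t ≥ 0. Define p(t) := exp(-a·t - b(t)), w(t) := exp(-(a+1)·t - b(t)), and ϖ(t) := ∫₀ᵗ 1/p(s) ds. Then ∫₀^∞ ϖ(t)² · w(t) dt = ∞. -/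
open Set MeasureTheory

/-- Deterministic limit-point estimate for `a > 1`: `∫₀^∞ ϖ(t)²·w(t) dt = ∞`. -/
theorem stmt3 (a δ C : ℝ) (ha : 1 < a)
    (hδ : δ ∈ Set.Ioo (0 : ℝ) (min ((a - 1) / 3) (1 / 2))) (hC : 0 < C)
    (b : ℝ → ℝ) (hb : Continuous b)
    (hbound : ∀ t : ℝ, 0 ≤ t → |b t| ≤ C * (1 + t ^ ((3 : ℝ) / 4)))
    (p w ϖ : ℝ → ℝ)
    (hp : ∀ t, p t = Real.exp (-(a * t) - b t))
    (hw : ∀ t, w t = Real.exp (-((a + 1) * t) - b t))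
    (hϖ : ∀ t, ϖ t = ∫ s in (0 : ℝ)..t, 1 / p s) :
    ∫⁻ t in Set.Ioi (0 : ℝ), ENNReal.ofReal ((ϖ t) ^ 2 * w t) = ⊤ := by
  have ha1 : 0 < a - 1 := by linarith
  set M : ℝ := (2 * a + 6 * C) / (a - 1) with hMdef
  have hM0 : 0 < M := div_pos (by linarith) ha1
  set T : ℝ := max 1 (M ^ 4) with hTdef
  have hT1 : (1 : ℝ) ≤ T := le_max_left _ _
  have hcont : Continuous fun s => Real.exp (a * s + b s) :=
    Real.continuous_exp.comp (by continuity)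
  have h1p : ∀ s, 1 / p s = Real.exp (a * s + b s) := by
    intro s
    rw [hp, one_div, ← Real.exp_neg]
    congr 1; ring
  -- main pointwise bound
  have key : ∀ t, T ≤ t → 1 ≤ ϖ t ^ 2 * w t := by
    intro t ht
    have ht1 : (1 : ℝ) ≤ t := le_trans hT1 ht
    have ht0 : (0 : ℝ) ≤ t := by linarith
    have ht34 : (1 : ℝ) ≤ t ^ ((3 : ℝ) / 4) := by
      calc (1 : ℝ) = 1 ^ ((3 : ℝ) / 4) := (Real.one_rpow _).symm
        _ ≤ t ^ ((3 : ℝ) / 4) := Real.rpow_le_rpow zero_le_one ht1 (by norm_num)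
    set K : ℝ := Real.exp (a * (t - 1) - C * (1 + t ^ ((3 : ℝ) / 4))) with hKdef
    have hK0 : 0 ≤ K := (Real.exp_pos _).le
    -- lower bound on ϖ t
    have hϖK : K ≤ ϖ t := by
      rw [hϖ]
      simp only [h1p]
      have hI1 : IntervalIntegrable (fun s => Real.exp (a * s + b s)) volume 0 (t - 1) :=
        hcont.intervalIntegrable _ _
      have hI2 : IntervalIntegrable (fun s => Real.exp (a * s + b s)) volume (t - 1) t :=
        hcont.intervalIntegrable _ _
      have hsplit : (∫ s in (0 : ℝ)..(t - 1), Real.exp (a * s + b s))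
          + ∫ s in (t - 1)..t, Real.exp (a * s + b s)
          = ∫ s in (0 : ℝ)..t, Real.exp (a * s + b s) :=
        intervalIntegral.integral_add_adjacent_intervals hI1 hI2
      have h1 : (0 : ℝ) ≤ ∫ s in (0 : ℝ)..(t - 1), Real.exp (a * s + b s) :=
        intervalIntegral.integral_nonneg (by linarith) (fun s _ => (Real.exp_pos _).le)
      have hle : ∀ s ∈ Icc (t - 1) t, K ≤ Real.exp (a * s + b s) := by
        intro s hs
        obtain ⟨hs1, hs2⟩ := hs
        have hs0 : (0 : ℝ) ≤ s := by linarith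
        have hb1 : |b s| ≤ C * (1 + s ^ ((3 : ℝ) / 4)) := hbound s hs0
        have hs34 : s ^ ((3 : ℝ) / 4) ≤ t ^ ((3 : ℝ) / 4) :=
          Real.rpow_le_rpow hs0 hs2 (by norm_num)
        have hbs : -(C * (1 + t ^ ((3 : ℝ) / 4))) ≤ b s := by
          have := (abs_le.mp hb1).1
          nlinarith
        apply Real.exp_le_exp.mpr
        have : a * (t - 1) ≤ a * s := by nlinarith
        linarith
      have h2 : K ≤ ∫ s in (t - 1)..t, Real.exp (a * s + b s) := by
        have := intervalIntegral.integral_mono_on (by linarith : t - 1 ≤ t)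
          (intervalIntegrable_const) hI2 hle
        simpa using this
      linarith
    -- lower bound on w t
    have hwlb : Real.exp (-((a + 1) * t) - C * (1 + t ^ ((3 : ℝ) / 4))) ≤ w t := by
      rw [hw]
      apply Real.exp_le_exp.mpr
      have := (abs_le.mp (hbound t ht0)).2
      linarith
    -- combine
    have hprod : K ^ 2 * Real.exp (-((a + 1) * t) - C * (1 + t ^ ((3 : ℝ) / 4)))
        ≤ ϖ t ^ 2 * w t := by
      apply mul_le_mul (pow_le_pow_left₀ hK0 hϖK 2) hwlb (Real.exp_pos _).le
      positivity
    -- the exponent is nonnegative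
    have hexp : (1 : ℝ) ≤ K ^ 2 * Real.exp (-((a + 1) * t) - C * (1 + t ^ ((3 : ℝ) / 4))) := by
      rw [hKdef, sq, ← Real.exp_add, ← Real.exp_add]
      apply Real.one_le_exp
      -- need: 0 ≤ (a-1)t - 2a - 3C(1 + t^{3/4})
      have htM : M ≤ t ^ ((1 : ℝ) / 4) := by
        have h1 : M ^ (4 : ℕ) ≤ t := le_trans (le_max_right _ _) ht
        have h2 : ((M ^ (4 : ℕ) : ℝ)) ^ ((1 : ℝ) / 4) ≤ t ^ ((1 : ℝ) / 4) :=
          Real.rpow_le_rpow (by positivity) h1 (by norm_num)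
        calc M = ((M ^ (4 : ℕ) : ℝ)) ^ ((1 : ℝ) / 4) := by
              rw [← Real.rpow_natCast M 4, ← Real.rpow_mul hM0.le]
              norm_num
          _ ≤ t ^ ((1 : ℝ) / 4) := h2
      have hsplitpow : t ^ ((3 : ℝ) / 4) * t ^ ((1 : ℝ) / 4) = t := by
        rw [← Real.rpow_add (by linarith : (0 : ℝ) < t)]
        norm_num
      have hMa : (a - 1) * M = 2 * a + 6 * C := by
        rw [hMdef]; field_simp
      have ht34pos : (0 : ℝ) ≤ t ^ ((3 : ℝ) / 4) := by positivity
      have hq : (2 * a + 6 * C) * t ^ ((3 : ℝ) / 4) ≤ (a - 1) * t := by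
        calc (2 * a + 6 * C) * t ^ ((3 : ℝ) / 4)
            = ((a - 1) * M) * t ^ ((3 : ℝ) / 4) := by rw [hMa]
          _ ≤ (a - 1) * (t ^ ((3 : ℝ) / 4) * t ^ ((1 : ℝ) / 4)) := by
              nlinarith [mul_nonneg (mul_nonneg ha1.le ht34pos) (sub_nonneg.2 htM)]
          _ = (a - 1) * t := by rw [hsplitpow]
      nlinarith
    linarith
  -- conclude: integral over Ioi T of 1 is infinite
  have hT0 : (0 : ℝ) ≤ T := by linarith
  refine top_unique ?_
  calc (⊤ : ENNReal) = volume (Ioi T) := Real.volume_Ioi.symm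
    _ = ∫⁻ _t in Ioi T, 1 := (setLIntegral_one _).symm
    _ ≤ ∫⁻ t in Ioi T, ENNReal.ofReal (ϖ t ^ 2 * w t) := by
        refine lintegral_mono_ae ?_
        filter_upwards [ae_restrict_mem measurableSet_Ioi] with t ht
        rw [show (1 : ENNReal) = ENNReal.ofReal 1 by simp]
        exact ENNReal.ofReal_le_ofReal (key t (le_of_lt ht))
    _ ≤ ∫⁻ t in Ioi (0 : ℝ), ENNReal.ofReal (ϖ t ^ 2 * w t) :=
        lintegral_mono_set (Ioi_subset_Ioi hT0)
end

section
/- Let b : [0, ∞) → ℝ be continuous, let β > 0, and suppose there is a strictly increasing sequence (τ_k) of nonnegative reals with τ_{k+1} ≥ τ_k + 2 such that |b(t)| ≤ 1 for all t ∈ [τ_k, τ_k + 1] and all k. Define p(t) := exp(-t - (2/√β)·b(t)), w(t) := exp(-2t - (2/√β)·b(t)), and ϖ(t) := ∫₀ᵗ 1/p(s) ds. Then ∫₀^∞ ϖ(t)² · w(t) dt ≥ Σ_{k=1}^∞ (1/2)·e^{-6/√β}·(e^{1/2} - 1)²·(e^{-1} - e^{-2}) = ∞. -/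
open Set MeasureTheory

/-- Critical case `a = 1`: if `b` is bounded by `1` on infinitely many unit intervals
`[τ_k, τ_k + 1]` with `τ_{k+1} ≥ τ_k + 2`, then `∫₀^∞ ϖ(t)²·w(t) dt = ∞`, where
`p(t) = exp(-t - (2/√β) b(t))`, `w(t) = exp(-2t - (2/√β) b(t))`, `ϖ(t) = ∫₀ᵗ 1/p`. -/
theorem stmt4 (β : ℝ) (hβ : 0 < β) (b : ℝ → ℝ) (hb : Continuous b)
    (τ : ℕ → ℝ) (hτ0 : ∀ k, 0 ≤ τ k) (hτgap : ∀ k, τ k + 2 ≤ τ (k + 1))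
    (hτmono : StrictMono τ)
    (hbsmall : ∀ k, ∀ t ∈ Set.Icc (τ k) (τ k + 1), |b t| ≤ 1)
    (p w ϖ : ℝ → ℝ)
    (hp : ∀ t, p t = Real.exp (-t - (2 / Real.sqrt β) * b t))
    (hw : ∀ t, w t = Real.exp (-(2 * t) - (2 / Real.sqrt β) * b t))
    (hϖ : ∀ t, ϖ t = ∫ s in (0 : ℝ)..t, 1 / p s) :
    ∫⁻ t in Set.Ioi (0 : ℝ), ENNReal.ofReal ((ϖ t) ^ 2 * w t) = ⊤ := by
  set c : ℝ := 2 / Real.sqrt β with hcdef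
  have hc0 : 0 < c := div_pos two_pos (Real.sqrt_pos.mpr hβ)
  -- 1/p is the continuous function exp (s + c b s)
  have hpinv : ∀ s, 1 / p s = Real.exp (s + c * b s) := by
    intro s
    rw [hp, one_div, ← Real.exp_neg]
    ring_nf
  have hcont : Continuous (fun s => 1 / p s) := by
    have : (fun s => 1 / p s) = fun s => Real.exp (s + c * b s) := funext hpinv
    rw [this]; exact Real.continuous_exp.comp (continuous_id.add (continuous_const.mul hb))
  set C : ℝ := Real.exp (-(3 * c) - 2) * (Real.exp (1 / 2) - 1) ^ 2 with hCdef
  have hE1 : (1 : ℝ) < Real.exp (1 / 2) := by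
    rw [← Real.exp_zero]; exact Real.exp_lt_exp.mpr (by norm_num)
  have hC0 : 0 < C := mul_pos (Real.exp_pos _) (pow_pos (by linarith) 2)
  set I : ℕ → Set ℝ := fun k => Set.Ioc (τ k + 1 / 2) (τ k + 1) with hIdef
  -- pointwise lower bound on each I k
  have key : ∀ k, ∀ t ∈ I k, C ≤ (ϖ t) ^ 2 * w t := by
    intro k t ht
    obtain ⟨ht1, ht2⟩ := ht
    have h0τ : 0 ≤ τ k := hτ0 k
    have hτt : τ k ≤ t := by linarith
    have hint1 : IntervalIntegrable (fun s => 1 / p s) volume 0 (τ k) :=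
      hcont.intervalIntegrable _ _
    have hint2 : IntervalIntegrable (fun s => 1 / p s) volume (τ k) t :=
      hcont.intervalIntegrable _ _
    -- lower bound on ϖ t
    have hϖlb : Real.exp (-c) * (Real.exp (τ k) * (Real.exp (1 / 2) - 1)) ≤ ϖ t := by
      rw [hϖ, ← intervalIntegral.integral_add_adjacent_intervals hint1 hint2]
      have h1 : (0 : ℝ) ≤ ∫ s in (0 : ℝ)..(τ k), 1 / p s := by
        apply intervalIntegral.integral_nonneg h0τ
        intro s _
        rw [hpinv s]; positivity
      have hce : Continuous (fun s : ℝ => Real.exp (s - c)) :=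
        Real.continuous_exp.comp (continuous_id.sub continuous_const)
      have h2 : ∫ s in (τ k)..t, Real.exp (s - c) ≤ ∫ s in (τ k)..t, 1 / p s := by
        apply intervalIntegral.integral_mono_on hτt (hce.intervalIntegrable _ _) hint2
        intro s hs
        have hsmem : s ∈ Set.Icc (τ k) (τ k + 1) := ⟨hs.1, le_trans hs.2 ht2⟩
        have hbs := hbsmall k s hsmem
        have : -c ≤ c * b s := by nlinarith [abs_le.mp hbs]
        rw [hpinv s]
        exact Real.exp_le_exp.mpr (by linarith)
      have h3 : ∫ s in (τ k)..t, Real.exp (s - c) = Real.exp (t - c) - Real.exp (τ k - c) := by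
        rw [intervalIntegral.integral_comp_sub_right (fun s => Real.exp s) c,
          integral_exp]
      have h4 : Real.exp (-c) * (Real.exp (τ k) * (Real.exp (1 / 2) - 1))
          ≤ Real.exp (t - c) - Real.exp (τ k - c) := by
        have he1 : Real.exp (τ k + 1 / 2) ≤ Real.exp t := Real.exp_le_exp.mpr (by linarith)
        rw [Real.exp_add] at he1
        rw [show t - c = -c + t by ring, show τ k - c = -c + τ k by ring,
          Real.exp_add, Real.exp_add]
        nlinarith [Real.exp_pos (-c), Real.exp_pos (τ k)]
      linarith
    have hϖnn : 0 ≤ Real.exp (-c) * (Real.exp (τ k) * (Real.exp (1 / 2) - 1)) :=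
      mul_nonneg (Real.exp_pos _).le (mul_nonneg (Real.exp_pos _).le (by linarith))
    -- lower bound on w t
    have hwlb : Real.exp (-(2 * τ k) - 2 - c) ≤ w t := by
      rw [hw]
      apply Real.exp_le_exp.mpr
      have hbt := hbsmall k t ⟨hτt, ht2⟩
      have : c * b t ≤ c := by nlinarith [abs_le.mp hbt]
      linarith
    -- combine
    have hsq : (Real.exp (-c) * (Real.exp (τ k) * (Real.exp (1 / 2) - 1))) ^ 2 ≤ (ϖ t) ^ 2 :=
      pow_le_pow_left₀ hϖnn hϖlb 2
    have hcomb : (Real.exp (-c) * (Real.exp (τ k) * (Real.exp (1 / 2) - 1))) ^ 2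
        * Real.exp (-(2 * τ k) - 2 - c) ≤ (ϖ t) ^ 2 * w t := by
      apply mul_le_mul hsq hwlb (le_of_lt (Real.exp_pos _)) (by positivity)
    refine le_trans (le_of_eq ?_) hcomb
    have e1 : (Real.exp (-c) * (Real.exp (τ k) * (Real.exp (1 / 2) - 1))) ^ 2
        * Real.exp (-(2 * τ k) - 2 - c)
        = (Real.exp (-c) * Real.exp (-c) * Real.exp (τ k) * Real.exp (τ k)
          * Real.exp (-(2 * τ k) - 2 - c)) * (Real.exp (1 / 2) - 1) ^ 2 := by ring
    have e2 : Real.exp (-c) * Real.exp (-c) * Real.exp (τ k) * Real.exp (τ k)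
        * Real.exp (-(2 * τ k) - 2 - c) = Real.exp (-(3 * c) - 2) := by
      rw [← Real.exp_add, ← Real.exp_add, ← Real.exp_add, ← Real.exp_add]
      congr 1; ring
    rw [hCdef, e1, e2]
  -- measure theory
  have hImeas : ∀ k, MeasurableSet (I k) := fun k => measurableSet_Ioc
  have hgap : ∀ i j : ℕ, i < j → τ i + 2 ≤ τ j := by
    intro i j hij
    calc τ i + 2 ≤ τ (i + 1) := hτgap i
    _ ≤ τ j := hτmono.monotone (Nat.succ_le_of_lt hij)
  have hdisj : Pairwise (Function.onFun Disjoint I) := by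
    intro i j hij
    rcases lt_or_gt_of_ne hij with h | h
    · refine Disjoint.mono (Set.Ioc_subset_Iic_self) ?_ (Set.Iic_disjoint_Ioi (le_refl (τ i + 1)))
      intro x hx
      have := hgap i j h
      exact Set.mem_Ioi.mpr (by simp only [hIdef, Set.mem_Ioc] at hx; linarith [hx.1])
    · refine (Disjoint.mono (Set.Ioc_subset_Iic_self) ?_
        (Set.Iic_disjoint_Ioi (le_refl (τ j + 1)))).symm
      intro x hx
      have := hgap j i h
      exact Set.mem_Ioi.mpr (by simp only [hIdef, Set.mem_Ioc] at hx; linarith [hx.1])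
  have hsub : (⋃ k, I k) ⊆ Set.Ioi (0 : ℝ) := by
    intro x hx
    obtain ⟨k, hk⟩ := Set.mem_iUnion.mp hx
    have := hτ0 k
    simp only [hIdef, Set.mem_Ioc] at hk
    exact Set.mem_Ioi.mpr (by linarith [hk.1])
  have hlow : ∑' k, ∫⁻ t in I k, ENNReal.ofReal ((ϖ t) ^ 2 * w t)
      ≤ ∫⁻ t in Set.Ioi (0 : ℝ), ENNReal.ofReal ((ϖ t) ^ 2 * w t) := by
    rw [← lintegral_iUnion hImeas hdisj]
    exact lintegral_mono_set hsub
  have hterm : ∀ k, ENNReal.ofReal C * ENNReal.ofReal (1 / 2)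
      ≤ ∫⁻ t in I k, ENNReal.ofReal ((ϖ t) ^ 2 * w t) := by
    intro k
    calc ENNReal.ofReal C * ENNReal.ofReal (1 / 2)
        = ∫⁻ _ in I k, ENNReal.ofReal C := by
          rw [setLIntegral_const]
          congr 1
          rw [hIdef]
          simp only [Real.volume_Ioc]
          congr 1
          ring
    _ ≤ ∫⁻ t in I k, ENNReal.ofReal ((ϖ t) ^ 2 * w t) := by
          apply setLIntegral_mono' (hImeas k)
          intro t ht
          exact ENNReal.ofReal_le_ofReal (key k t ht)
  have htop : (⊤ : ENNReal) ≤ ∑' k, ∫⁻ t in I k, ENNReal.ofReal ((ϖ t) ^ 2 * w t) := by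
    have h1 : (∑' _ : ℕ, ENNReal.ofReal C * ENNReal.ofReal (1 / 2)) = ⊤ := by
      apply ENNReal.tsum_const_eq_top_of_ne_zero
      refine mul_ne_zero ?_ ?_ <;> rw [Ne, ENNReal.ofReal_eq_zero, not_le]
      · exact hC0
      · norm_num
    rw [← h1]
    exact ENNReal.tsum_le_tsum hterm
  exact top_le_iff.mp (le_trans htop hlow)
end
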